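/- Let G be a group presented by generators t₁, …, tₙ and relations t_{i+1} = wᵢ⁻¹ tᵢ wᵢ for i = 1, …, n (indices mod n). Then the subgroup of G generated by t₁ and the element l = w₁ w₂ ⋯ wₙ · t₁^{-p} (for any integer p) is abelian. -/

import Mathlib

private lemma conj_cycle {G : Type*} [Group G] (n : ℕ) (hn : 1 ≤ n)
    (t v : Fin n → G) (h : ∀ i, t (finRotate n i) = (v i)⁻¹ * t i * v i) :
    ((List.ofFn v).prod)⁻¹ * t ⟨0, hn⟩ * (List.ofFn v).prod = t ⟨0, hn⟩ := by
  obtain ⟨m, rfl⟩ : ∃ m, n = m + 1 := ⟨n - 1, by omega⟩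
  have key : ∀ k, k ≤ m + 1 → t ⟨k % (m+1), Nat.mod_lt _ (by omega)⟩ =
      (((List.ofFn v).take k).prod)⁻¹ * t ⟨0, hn⟩ * ((List.ofFn v).take k).prod := by
    intro k
    induction k with
    | zero => intro _; simp
    | succ k ih =>
      intro hk
      have hk' : k < m + 1 := by omega
      have ih' := ih (by omega)
      have hrel := h ⟨k, hk'⟩
      have hfin : finRotate (m+1) ⟨k, hk'⟩ = ⟨(k+1) % (m+1), Nat.mod_lt _ (by omega)⟩ := by
        rw [finRotate_succ_apply]
        ext
        simp [Fin.add_def]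
      have hidx : (⟨k % (m+1), Nat.mod_lt _ (by omega)⟩ : Fin (m+1)) = ⟨k, hk'⟩ := by
        ext; simp [Nat.mod_eq_of_lt hk']
      rw [hidx] at ih'
      rw [← hfin, hrel, ih']
      have htake : (List.ofFn v).take (k+1) = (List.ofFn v).take k ++ [v ⟨k, hk'⟩] := by
        have hlen : k < (List.ofFn v).length := by simpa using hk'
        rw [List.take_succ, List.getElem?_eq_getElem hlen, List.getElem_ofFn]
        rfl
      rw [htake]
      simp [mul_assoc]
  have hfinal := key (m+1) le_rfl
  have : ((List.ofFn v).take (m+1)) = List.ofFn v := by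
    apply List.take_of_length_le; simp
  rw [this] at hfinal
  simp only [Nat.mod_self] at hfinal
  exact hfinal.symm

theorem peripheral_subgroup_abelian (n : ℕ) (hn : 1 ≤ n)
    (w : Fin n → FreeGroup (Fin n)) (p : ℤ) :
    IsMulCommutative ↥(Subgroup.closure
      {(QuotientGroup.mk (FreeGroup.of (⟨0, hn⟩ : Fin n)) :
          PresentedGroup {r : FreeGroup (Fin n) |
            ∃ i : Fin n, r = (FreeGroup.of (finRotate n i))⁻¹ * ((w i)⁻¹ * FreeGroup.of i * w i)}),
        QuotientGroup.mk ((List.ofFn w).prod * (FreeGroup.of (⟨0, hn⟩ : Fin n)) ^ (-p))}) := by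
  set rels : Set (FreeGroup (Fin n)) := {r : FreeGroup (Fin n) |
      ∃ i : Fin n, r = (FreeGroup.of (finRotate n i))⁻¹ * ((w i)⁻¹ * FreeGroup.of i * w i)} with hrels
  set G := PresentedGroup rels
  let mk : FreeGroup (Fin n) →* G := QuotientGroup.mk' (Subgroup.normalClosure rels)
  have hrel : ∀ i : Fin n, mk (FreeGroup.of (finRotate n i)) =
      (mk (w i))⁻¹ * mk (FreeGroup.of i) * mk (w i) := by
    intro i
    have hm : (FreeGroup.of (finRotate n i))⁻¹ * ((w i)⁻¹ * FreeGroup.of i * w i) ∈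
        Subgroup.normalClosure rels := Subgroup.subset_normalClosure ⟨i, rfl⟩
    have := (QuotientGroup.eq (s := Subgroup.normalClosure rels)).mpr hm
    exact this
  have hW : mk ((List.ofFn w).prod) = (List.ofFn (fun i => mk (w i))).prod := by
    rw [map_list_prod, List.map_ofFn]; rfl
  have hconj := conj_cycle n hn (fun i => mk (FreeGroup.of i)) (fun i => mk (w i)) hrel
  -- commute
  have hcommW : mk ((List.ofFn w).prod) * mk (FreeGroup.of (⟨0, hn⟩ : Fin n)) =
      mk (FreeGroup.of (⟨0, hn⟩ : Fin n)) * mk ((List.ofFn w).prod) := by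
    rw [hW]
    have h2 := congrArg (fun x => (List.ofFn fun i => mk (w i)).prod * x) hconj
    simpa [mul_assoc] using h2.symm
  set t0 : G := mk (FreeGroup.of (⟨0, hn⟩ : Fin n)) with ht0
  have hl : (QuotientGroup.mk ((List.ofFn w).prod * (FreeGroup.of (⟨0, hn⟩ : Fin n)) ^ (-p)) : G)
      = mk ((List.ofFn w).prod) * t0 ^ (-p) := by
    simp only [QuotientGroup.mk_mul, QuotientGroup.mk_zpow]
    rfl
  have hcomm : ∀ x ∈ ({(QuotientGroup.mk (FreeGroup.of (⟨0, hn⟩ : Fin n)) : G),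
        QuotientGroup.mk ((List.ofFn w).prod * (FreeGroup.of (⟨0, hn⟩ : Fin n)) ^ (-p))} : Set G),
      ∀ y ∈ ({(QuotientGroup.mk (FreeGroup.of (⟨0, hn⟩ : Fin n)) : G),
        QuotientGroup.mk ((List.ofFn w).prod * (FreeGroup.of (⟨0, hn⟩ : Fin n)) ^ (-p))} : Set G),
      x * y = y * x := by
    have hml : t0 * (mk ((List.ofFn w).prod) * t0 ^ (-p)) =
        (mk ((List.ofFn w).prod) * t0 ^ (-p)) * t0 := by
      have h1 : Commute t0 (mk ((List.ofFn w).prod)) := (hcommW).symm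
      have h2 : Commute t0 (t0 ^ (-p)) := (Commute.refl t0).zpow_right _
      exact (h1.mul_right h2).eq
    rintro x (rfl | rfl) y (rfl | rfl)
    · rfl
    · rw [hl]; exact hml
    · rw [hl]; exact hml.symm
    · rfl
  exact ⟨⟨fun a b => Subtype.ext <|
    Set.centralizer_centralizer_comm_of_comm hcomm _
      (Subgroup.closure_le_centralizer_centralizer _ a.2) _
      (Subgroup.closure_le_centralizer_centralizer _ b.2)⟩⟩
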